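/- Let n ≥ 1, r > 0, p > 0, ε > 0, and let λ₁,…,λₙ be real numbers with λ_ℓ ≥ ε for all ℓ. Let s be a holomorphic function on an open neighborhood of the closed polydisk Δⁿ(0,r) = {z ∈ ℂⁿ : |z_ℓ| ≤ r for ℓ = 1,…,n}. Then |s(0)|² ≤ (pⁿ λ₁ ⋯ λₙ / E(r√(pε))ⁿ) · ∫_{Δⁿ(0,r)} |s(z)|² exp(−2p ∑_{ℓ=1}^{n} λ_ℓ |z_ℓ|²) dm(z), where E(u) := (π/2)(1 − e^{−2u²}). -/

import Mathlib

open MeasureTheory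

/-- `E(u) = (π/2)(1 - e^{-2u²})`. -/
noncomputable def E (u : ℝ) : ℝ := Real.pi / 2 * (1 - Real.exp (-2 * u ^ 2))

open Set

/-- Cauchy–Schwarz: (∫ g)² ≤ μ(univ) ∫ g². -/
lemma sq_integral_le_measure_mul {α : Type*} [MeasurableSpace α] (μ : Measure α)
    [IsFiniteMeasure μ] {g : α → ℝ} (hg : Integrable g μ)
    (hg2 : Integrable (fun x => g x ^ 2) μ) :
    (∫ x, g x ∂μ) ^ 2 ≤ (μ univ).toReal * ∫ x, g x ^ 2 ∂μ := by
  set T := (μ univ).toReal with hT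
  have hT0 : 0 ≤ T := ENNReal.toReal_nonneg
  rcases eq_or_lt_of_le hT0 with h0 | hTpos
  · have hμ : μ = 0 := by
      have := ENNReal.toReal_eq_zero_iff (μ univ)
      rcases this.mp h0.symm with h | h
      · exact Measure.measure_univ_eq_zero.mp h
      · exact absurd h (measure_ne_top μ univ)
    simp [hμ]
  · set I := ∫ x, g x ∂μ with hI
    have key : 0 ≤ ∫ x, (g x - I / T) ^ 2 ∂μ :=
      integral_nonneg fun x => sq_nonneg _
    have expand : ∫ x, (g x - I / T) ^ 2 ∂μ
        = (∫ x, g x ^ 2 ∂μ) - 2 * (I / T) * I + (I / T) ^ 2 * T := by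
      have h1 : ∀ x, (g x - I / T) ^ 2 = g x ^ 2 - 2 * (I / T) * g x + (I / T) ^ 2 := by
        intro x; ring
      simp_rw [h1]
      rw [integral_add (by exact hg2.sub ((hg.const_mul _))) (integrable_const _),
        integral_sub hg2 (hg.const_mul _), integral_const, integral_const_mul]
      simp [smul_eq_mul, mul_comm]
      rfl
    have : 0 ≤ (∫ x, g x ^ 2 ∂μ) - I ^ 2 / T := by
      have := key
      rw [expand] at this
      have hTne : T ≠ 0 := ne_of_gt hTpos
      have h3 : 0 ≤ (∫ x, g x ^ 2 ∂μ) - 2 * (I / T) * I + (I / T) ^ 2 * T := this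
      have : (I / T) ^ 2 * T = I ^ 2 / T := by field_simp
      rw [this] at h3
      have : 2 * (I / T) * I = 2 * (I ^ 2 / T) := by field_simp
      rw [this] at h3
      linarith
    have := this
    have h2 : I ^ 2 / T ≤ ∫ x, g x ^ 2 ∂μ := by linarith
    calc I ^ 2 = T * (I ^ 2 / T) := by field_simp
    _ ≤ T * ∫ x, g x ^ 2 ∂μ := by
        exact mul_le_mul_of_nonneg_left h2 hT0

lemma circle_submean {f : ℂ → ℂ} {U : Set ℂ} (hU : IsOpen U) (hf : DifferentiableOn ℂ f U)
    {t : ℝ} (ht : 0 < t) (hsub : Metric.closedBall (0:ℂ) t ⊆ U) :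
    ‖f 0‖ ^ 2 * (2 * Real.pi) ≤ ∫ θ in Set.Ioc (-Real.pi) Real.pi, ‖f (circleMap 0 t θ)‖ ^ 2 := by
  have hcont : Continuous fun θ => f (circleMap 0 t θ) := by
    rw [← continuousOn_univ]
    exact hf.continuousOn.comp (continuous_circleMap 0 t).continuousOn
      (fun θ _ => hsub (Metric.sphere_subset_closedBall (circleMap_mem_sphere _ ht.le _)))
  -- Cauchy integral formula
  have hc : (∮ z in C(0, t), (z - 0)⁻¹ • f z) = (2 * Real.pi * Complex.I) • f 0 :=
    Complex.circleIntegral_sub_center_inv_smul_of_differentiable_on_off_countable ht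
      Set.countable_empty (hf.continuousOn.mono hsub)
      (fun z hz => hf.differentiableAt (hU.mem_nhds (hsub (Metric.ball_subset_closedBall hz.1))))
  have hne : ∀ θ : ℝ, circleMap 0 t θ ≠ 0 := fun θ => circleMap_ne_center ht.ne'
  have hI : (∮ z in C(0, t), (z - 0)⁻¹ • f z)
      = Complex.I * ∫ θ in (0:ℝ)..(2 * Real.pi), f (circleMap 0 t θ) := by
    rw [circleIntegral, ← intervalIntegral.integral_const_mul]
    congr 1; funext θ
    rw [deriv_circleMap]
    simp only [smul_eq_mul, sub_zero]
    field_simp [hne θ]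
  have hJ : (∫ θ in (0:ℝ)..(2 * Real.pi), f (circleMap 0 t θ)) = (2 * Real.pi) * f 0 := by
    have := hc
    rw [hI] at this
    have h2 : Complex.I * ∫ θ in (0:ℝ)..(2 * Real.pi), f (circleMap 0 t θ)
        = Complex.I * ((2 * Real.pi) * f 0) := by
      rw [this]; simp [smul_eq_mul]; ring
    exact mul_left_cancel₀ Complex.I_ne_zero h2
  -- norm bound
  have hnorm : 2 * Real.pi * ‖f 0‖ ≤ ∫ θ in (0:ℝ)..(2 * Real.pi), ‖f (circleMap 0 t θ)‖ := by
    have h1 : ‖(2 * Real.pi : ℂ) * f 0‖ = 2 * Real.pi * ‖f 0‖ := by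
      rw [norm_mul]
      congr 1
      simp [abs_of_pos Real.two_pi_pos, Real.pi_pos.le]
    calc 2 * Real.pi * ‖f 0‖ = ‖∫ θ in (0:ℝ)..(2 * Real.pi), f (circleMap 0 t θ)‖ := by
          rw [hJ, h1]
      _ ≤ ∫ θ in (0:ℝ)..(2 * Real.pi), ‖f (circleMap 0 t θ)‖ :=
          intervalIntegral.norm_integral_le_integral_norm Real.two_pi_pos.le
  -- Cauchy-Schwarz
  set g : ℝ → ℝ := fun θ => ‖f (circleMap 0 t θ)‖ with hgdef
  have hgc : Continuous g := hcont.norm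
  have hgint : Integrable g (volume.restrict (Set.Ioc 0 (2 * Real.pi))) :=
    (hgc.integrableOn_Ioc (a := 0) (b := 2 * Real.pi))
  have hg2int : Integrable (fun θ => g θ ^ 2) (volume.restrict (Set.Ioc 0 (2 * Real.pi))) :=
    ((hgc.pow 2).integrableOn_Ioc (a := 0) (b := 2 * Real.pi))
  have hmeas : ((volume.restrict (Set.Ioc (0:ℝ) (2 * Real.pi))) Set.univ).toReal = 2 * Real.pi := by
    rw [Measure.restrict_apply MeasurableSet.univ, Set.univ_inter, Real.volume_Ioc]
    rw [sub_zero, ENNReal.toReal_ofReal Real.two_pi_pos.le]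
  have hCS := sq_integral_le_measure_mul (volume.restrict (Set.Ioc 0 (2 * Real.pi))) hgint hg2int
  rw [hmeas] at hCS
  have hset : (∫ θ in (0:ℝ)..(2 * Real.pi), g θ) = ∫ θ in Set.Ioc (0:ℝ) (2 * Real.pi), g θ :=
    intervalIntegral.integral_of_le Real.two_pi_pos.le
  -- combine
  have hS0 : (2 * Real.pi * ‖f 0‖) ^ 2 ≤ (2 * Real.pi) * ∫ θ in Set.Ioc (0:ℝ) (2 * Real.pi), g θ ^ 2 := by
    have h1 : (2 * Real.pi * ‖f 0‖) ^ 2 ≤ (∫ θ in Set.Ioc (0:ℝ) (2 * Real.pi), g θ) ^ 2 := by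
      have hAnn : 0 ≤ 2 * Real.pi * ‖f 0‖ := by positivity
      apply pow_le_pow_left₀ hAnn
      rw [← hset]; exact hnorm
    exact h1.trans hCS
  have hshift : (∫ θ in Set.Ioc (0:ℝ) (2 * Real.pi), g θ ^ 2)
      = ∫ θ in Set.Ioc (-Real.pi) Real.pi, g θ ^ 2 := by
    have hper : Function.Periodic (fun θ => g θ ^ 2) (2 * Real.pi) := by
      intro θ
      simp only [hgdef]
      rw [periodic_circleMap 0 t θ]
    have := hper.intervalIntegral_add_eq (-Real.pi) 0
    rw [← intervalIntegral.integral_of_le Real.two_pi_pos.le,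
      ← intervalIntegral.integral_of_le (by linarith [Real.pi_pos] : -Real.pi ≤ Real.pi)]
    have hpi : -Real.pi + 2 * Real.pi = Real.pi := by ring
    have hz : (0:ℝ) + 2 * Real.pi = 2 * Real.pi := by ring
    rw [hpi, hz] at this
    exact this.symm
  rw [hshift] at hS0
  nlinarith [Real.two_pi_pos, sq_nonneg (‖f 0‖), hS0]

lemma disk_weighted_bound {f : ℂ → ℂ} {V : Set ℂ} (hV : IsOpen V) (hf : DifferentiableOn ℂ f V)
    {ρ a : ℝ} (hρ : 0 < ρ) (ha : 0 < a) (hsub : Metric.closedBall (0:ℂ) ρ ⊆ V) :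
    ‖f 0‖ ^ 2 * (Real.pi * (1 - Real.exp (-2 * a * ρ ^ 2)) / (2 * a)) ≤
      ∫ z in Metric.closedBall (0:ℂ) ρ, ‖f z‖ ^ 2 * Real.exp (-2 * a * ‖z‖ ^ 2) := by
  set G : ℂ → ℝ := (Metric.closedBall (0:ℂ) ρ).indicator
      (fun z => ‖f z‖ ^ 2 * Real.exp (-2 * a * ‖z‖ ^ 2)) with hGdef
  set A : Set (ℝ × ℝ) := Set.Ioc 0 ρ ×ˢ Set.Ioo (-Real.pi) Real.pi with hAdef
  set H : ℝ × ℝ → ℝ := fun p => p.1 * (‖f (Complex.polarCoord.symm p)‖ ^ 2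
      * Real.exp (-2 * a * p.1 ^ 2)) with hHdef
  have hφ : Continuous fun p : ℝ × ℝ => Complex.polarCoord.symm p := by
    have : (fun p : ℝ × ℝ => Complex.polarCoord.symm p)
        = fun p : ℝ × ℝ => (p.1 : ℂ) * (Real.cos p.2 + Real.sin p.2 * Complex.I) := by
      funext p; exact Complex.polarCoord_symm_apply p
    rw [this]; continuity
  have hφnorm : ∀ p : ℝ × ℝ, ‖Complex.polarCoord.symm p‖ = |p.1| := fun p =>
    Complex.norm_polarCoord_symm p
  -- step 1: RHS as a full integral and polar change of variables
  have h1 : (∫ z in Metric.closedBall (0:ℂ) ρ, ‖f z‖ ^ 2 * Real.exp (-2 * a * ‖z‖ ^ 2))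
      = ∫ z, G z := (integral_indicator (Metric.isClosed_closedBall.measurableSet)).symm
  have h2 : (∫ z, G z) = ∫ p in polarCoord.target, p.1 • G (Complex.polarCoord.symm p) :=
    (Complex.integral_comp_polarCoord_symm G).symm
  have h3 : (∫ p in polarCoord.target, p.1 • G (Complex.polarCoord.symm p)) = ∫ p in A, H p := by
    have htarget : polarCoord.target = Set.Ioi (0:ℝ) ×ˢ Set.Ioo (-Real.pi) Real.pi := rfl
    have hcongr : ∀ p ∈ polarCoord.target,
        p.1 • G (Complex.polarCoord.symm p) = A.indicator H p := by
      intro p hp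
      rw [htarget] at hp
      obtain ⟨hp1, hp2⟩ := hp
      have habs : ‖Complex.polarCoord.symm p‖ = p.1 := by
        rw [hφnorm p, abs_of_pos hp1]
      by_cases hle : p.1 ≤ ρ
      · have hmem : Complex.polarCoord.symm p ∈ Metric.closedBall (0:ℂ) ρ := by
          simp only [Metric.mem_closedBall, dist_zero_right, habs]; exact hle
        have hmemA : p ∈ A := ⟨⟨hp1, hle⟩, hp2⟩
        rw [Set.indicator_of_mem hmemA, hGdef, Set.indicator_of_mem hmem, hHdef]
        simp only [smul_eq_mul, habs]
      · have hmem : Complex.polarCoord.symm p ∉ Metric.closedBall (0:ℂ) ρ := by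
          intro hmem
          exact hle (by
            have := hmem
            rw [Metric.mem_closedBall, dist_zero_right, habs] at this
            exact this)
        have hmemA : p ∉ A := fun hmemA => hle hmemA.1.2
        rw [Set.indicator_of_notMem hmemA, hGdef, Set.indicator_of_notMem hmem]
        simp
    rw [setIntegral_congr_fun polarCoord.open_target.measurableSet hcongr]
    rw [setIntegral_indicator (measurableSet_Ioc.prod measurableSet_Ioo)]
    congr 1
    rw [htarget, Set.inter_eq_self_of_subset_right
      (Set.prod_mono Set.Ioc_subset_Ioi_self subset_rfl)]
  -- symm equals circleMap
  have hsymm : ∀ t θ : ℝ, Complex.polarCoord.symm (t, θ) = circleMap 0 t θ := by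
    intro t θ
    rw [Complex.polarCoord_symm_apply, circleMap]
    simp [Complex.exp_mul_I, ← Complex.ofReal_cos, ← Complex.ofReal_sin]
  -- integrability of H on A
  set K : Set (ℝ × ℝ) := Set.Icc (0:ℝ) ρ ×ˢ Set.Icc (-Real.pi) Real.pi with hKdef
  have hK : IsCompact K := isCompact_Icc.prod isCompact_Icc
  have hmaps : Set.MapsTo (fun p : ℝ × ℝ => Complex.polarCoord.symm p) K V := by
    intro p hp
    apply hsub
    rw [Metric.mem_closedBall, dist_zero_right, hφnorm p]
    rw [abs_of_nonneg hp.1.1]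
    exact hp.1.2
  have hHcontK : ContinuousOn H K := by
    apply ContinuousOn.mul continuous_fst.continuousOn
    apply ContinuousOn.mul
    · exact ((hf.continuousOn.comp hφ.continuousOn hmaps).norm.pow 2)
    · exact (Continuous.continuousOn (by fun_prop))
  have hAK : A ⊆ K := Set.prod_mono Set.Ioc_subset_Icc_self Set.Ioo_subset_Icc_self
  have hHint : IntegrableOn H A := (hHcontK.integrableOn_compact hK).mono_set hAK
  -- Fubini
  have hfub : (∫ p in A, H p)
      = ∫ t in Set.Ioc (0:ℝ) ρ, ∫ θ in Set.Ioo (-Real.pi) Real.pi, H (t, θ) := by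
    rw [hAdef]
    rw [show (volume : Measure (ℝ × ℝ)) = (volume : Measure ℝ).prod volume from Measure.volume_eq_prod ℝ ℝ]
      at hHint ⊢
    exact setIntegral_prod H (by rw [hAdef] at hHint; exact hHint)
  -- integrability of the inner-integral function
  have hHint' : Integrable H (((volume : Measure ℝ).restrict (Set.Ioc 0 ρ)).prod
      ((volume : Measure ℝ).restrict (Set.Ioo (-Real.pi) Real.pi))) := by
    rw [Measure.prod_restrict]
    rw [show (volume : Measure (ℝ × ℝ)) = (volume : Measure ℝ).prod volume from Measure.volume_eq_prod ℝ ℝ]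
      at hHint
    exact hHint
  have hinner_int : Integrable (fun t => ∫ θ in Set.Ioo (-Real.pi) Real.pi, H (t, θ))
      ((volume : Measure ℝ).restrict (Set.Ioc 0 ρ)) := hHint'.integral_prod_left
  -- pointwise lower bound on the inner integral
  set c0 : ℝ := ‖f 0‖ ^ 2 * (2 * Real.pi) with hc0
  have hinner_lb : ∀ t ∈ Set.Ioc (0:ℝ) ρ,
      c0 * (t * Real.exp (-2 * a * t ^ 2)) ≤ ∫ θ in Set.Ioo (-Real.pi) Real.pi, H (t, θ) := by
    intro t htmem
    obtain ⟨ht0, htρ⟩ := htmem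
    have hcb : Metric.closedBall (0:ℂ) t ⊆ V :=
      (Metric.closedBall_subset_closedBall htρ).trans hsub
    have hcirc := circle_submean hV hf ht0 hcb
    have heq : (∫ θ in Set.Ioo (-Real.pi) Real.pi, H (t, θ))
        = (t * Real.exp (-2 * a * t ^ 2)) *
          ∫ θ in Set.Ioo (-Real.pi) Real.pi, ‖f (circleMap 0 t θ)‖ ^ 2 := by
      rw [← integral_const_mul]
      congr 1; funext θ
      rw [hHdef]; simp only [hsymm t θ]; ring
    rw [heq]
    rw [← integral_Ioc_eq_integral_Ioo] at *
    calc c0 * (t * Real.exp (-2 * a * t ^ 2))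
        = (t * Real.exp (-2 * a * t ^ 2)) * (‖f 0‖ ^ 2 * (2 * Real.pi)) := by rw [hc0]; ring
      _ ≤ (t * Real.exp (-2 * a * t ^ 2)) *
          ∫ θ in Set.Ioc (-Real.pi) Real.pi, ‖f (circleMap 0 t θ)‖ ^ 2 := by
          apply mul_le_mul_of_nonneg_left hcirc
          positivity
  -- compare integrals over Ioc 0 ρ
  have hψint : Integrable (fun t => c0 * (t * Real.exp (-2 * a * t ^ 2)))
      ((volume : Measure ℝ).restrict (Set.Ioc 0 ρ)) :=
    (Continuous.integrableOn_Ioc (by fun_prop))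
  have houter : (∫ t in Set.Ioc (0:ℝ) ρ, c0 * (t * Real.exp (-2 * a * t ^ 2)))
      ≤ ∫ t in Set.Ioc (0:ℝ) ρ, ∫ θ in Set.Ioo (-Real.pi) Real.pi, H (t, θ) :=
    setIntegral_mono_on hψint hinner_int measurableSet_Ioc hinner_lb
  -- compute the lower integral
  have hcomp : (∫ t in Set.Ioc (0:ℝ) ρ, t * Real.exp (-2 * a * t ^ 2))
      = (1 - Real.exp (-2 * a * ρ ^ 2)) / (4 * a) := by
    have hderiv : ∀ t : ℝ, HasDerivAt (fun u => -(Real.exp (-2 * a * u ^ 2) / (4 * a)))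
        (t * Real.exp (-2 * a * t ^ 2)) t := by
      intro t
      have hu : HasDerivAt (fun u : ℝ => -2 * a * u ^ 2) (-2 * a * (2 * t)) t := by
        simpa using ((hasDerivAt_pow 2 t).const_mul (-2 * a))
      have hexp := hu.exp
      have := (hexp.div_const (4 * a)).neg
      exact this.congr_deriv (by
        rw [← neg_div, div_eq_iff (by positivity : (4:ℝ)*a ≠ 0)]
        ring)
    rw [← intervalIntegral.integral_of_le hρ.le]
    rw [intervalIntegral.integral_eq_sub_of_hasDerivAt (fun t _ => hderiv t)
      ((Continuous.intervalIntegrable (by fun_prop) 0 ρ))]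
    field_simp
    ring_nf; rw [Real.exp_zero]; ring
  -- put everything together
  rw [h1, h2, h3, hfub]
  calc ‖f 0‖ ^ 2 * (Real.pi * (1 - Real.exp (-2 * a * ρ ^ 2)) / (2 * a))
      = c0 * ((1 - Real.exp (-2 * a * ρ ^ 2)) / (4 * a)) := by rw [hc0]; field_simp; ring
    _ = ∫ t in Set.Ioc (0:ℝ) ρ, c0 * (t * Real.exp (-2 * a * t ^ 2)) := by
        rw [integral_const_mul, hcomp]
    _ ≤ _ := houter


lemma insertNth0_eq_cons {n : ℕ} (w : ℂ) (y : Fin n → ℂ) :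
    (Fin.insertNth 0 w y : Fin (n+1) → ℂ) = Fin.cons w y := Fin.insertNth_zero' w y

lemma continuous_cons' {n : ℕ} :
    Continuous fun q : ℂ × (Fin n → ℂ) => (Fin.cons q.1 q.2 : Fin (n+1) → ℂ) := by
  apply continuous_pi
  intro i
  induction i using Fin.cases with
  | zero => simpa using (continuous_fst : Continuous fun q : ℂ × (Fin n → ℂ) => q.1)
  | succ j =>
      simp only [Fin.cons_succ]
      exact (continuous_apply j).comp continuous_snd

lemma differentiable_cons_snd {n : ℕ} (w : ℂ) :
    Differentiable ℂ fun y : Fin n → ℂ => (Fin.cons w y : Fin (n+1) → ℂ) := by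
  rw [differentiable_pi]
  intro i
  induction i using Fin.cases with
  | zero => simp only [Fin.cons_zero]; exact differentiable_const w
  | succ j =>
      simp only [Fin.cons_succ]
      exact differentiable_pi.mp differentiable_id j

lemma differentiable_cons_fst {n : ℕ} :
    Differentiable ℂ fun w : ℂ => (Fin.cons w (0 : Fin n → ℂ) : Fin (n+1) → ℂ) := by
  rw [differentiable_pi]
  intro i
  induction i using Fin.cases with
  | zero => simp only [Fin.cons_zero]; exact differentiable_id
  | succ j => simp only [Fin.cons_succ]; exact differentiable_const _

lemma cons_zero_zero {n : ℕ} : (Fin.cons (0:ℂ) (0 : Fin n → ℂ) : Fin (n+1) → ℂ) = 0 := by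
  funext i
  induction i using Fin.cases with
  | zero => simp
  | succ j => simp

lemma continuous_cons_fst {n : ℕ} :
    Continuous fun w : ℂ => (Fin.cons w (0 : Fin n → ℂ) : Fin (n+1) → ℂ) :=
  (differentiable_cons_fst).continuous

lemma poly_weighted_bound (n : ℕ) : ∀ (ρ a : Fin n → ℝ), (∀ ℓ, 0 < ρ ℓ) → (∀ ℓ, 0 < a ℓ) →
    ∀ (s : (Fin n → ℂ) → ℂ) (U : Set (Fin n → ℂ)), IsOpen U →
    {z : Fin n → ℂ | ∀ ℓ, ‖z ℓ‖ ≤ ρ ℓ} ⊆ U → DifferentiableOn ℂ s U →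
    ‖s 0‖ ^ 2 * ∏ ℓ, (Real.pi * (1 - Real.exp (-2 * a ℓ * ρ ℓ ^ 2)) / (2 * a ℓ)) ≤
      ∫ z in {z : Fin n → ℂ | ∀ ℓ, ‖z ℓ‖ ≤ ρ ℓ},
        ‖s z‖ ^ 2 * Real.exp (-2 * ∑ ℓ, a ℓ * ‖z ℓ‖ ^ 2) := by
  induction n with
  | zero =>
      intro ρ a hρ ha s U hU hsubU hs
      have hS : {z : Fin 0 → ℂ | ∀ ℓ, ‖z ℓ‖ ≤ ρ ℓ} = Set.univ := by
        ext z; simp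
      have hvol : (volume : Measure (Fin 0 → ℂ)) = Measure.dirac 0 := by
        rw [volume_pi, Measure.pi_of_empty]
        congr 1
        exact Subsingleton.elim _ _
      have hconst : (fun z : Fin 0 → ℂ => ‖s z‖ ^ 2 * Real.exp (-2 * ∑ ℓ, a ℓ * ‖z ℓ‖ ^ 2))
          = fun _ => ‖s 0‖ ^ 2 * Real.exp (-2 * ∑ ℓ : Fin 0, a ℓ * ‖(0 : Fin 0 → ℂ) ℓ‖ ^ 2) := by
        funext z; rw [Subsingleton.elim z 0]
      rw [hS, setIntegral_univ, hconst, hvol, integral_const]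
      simp
  | succ n ih =>
      intro ρ a hρ ha s U hU hsubU hs
      set S : Set (Fin (n+1) → ℂ) := {z | ∀ ℓ, ‖z ℓ‖ ≤ ρ ℓ} with hSdef
      set F : (Fin (n+1) → ℂ) → ℝ :=
        fun z => ‖s z‖ ^ 2 * Real.exp (-2 * ∑ ℓ, a ℓ * ‖z ℓ‖ ^ 2) with hFdef
      set e := MeasurableEquiv.piFinSuccAbove (fun _ : Fin (n+1) => ℂ) 0 with hedef
      have hmp : MeasurePreserving e (volume : Measure (Fin (n+1) → ℂ))
          ((volume : Measure ℂ).prod (volume : Measure (Fin n → ℂ))) := by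
        simpa only [← volume_pi] using
          measurePreserving_piFinSuccAbove (fun _ : Fin (n+1) => (volume : Measure ℂ)) 0
      have hsymm : ∀ q : ℂ × (Fin n → ℂ), (e.symm q : Fin (n+1) → ℂ) = Fin.cons q.1 q.2 := by
        intro q
        rw [hedef]
        rw [MeasurableEquiv.piFinSuccAbove_symm_apply]
        exact insertNth0_eq_cons q.1 q.2
      have happly : ∀ z : Fin (n+1) → ℂ, (e z : ℂ × (Fin n → ℂ))
          = (z 0, fun j => z ((0 : Fin (n+1)).succAbove j)) := by
        intro z; rw [hedef]; rfl
      set B : Set ℂ := Metric.closedBall (0:ℂ) (ρ 0) with hBdef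
      set S' : Set (Fin n → ℂ) := {y | ∀ j, ‖y j‖ ≤ ρ (Fin.succ j)} with hS'def
      have hmemS : ∀ (w : ℂ) (y : Fin n → ℂ), w ∈ B → y ∈ S' →
          (Fin.cons w y : Fin (n+1) → ℂ) ∈ S := by
        intro w y hw hy
        rw [hSdef]
        intro ℓ
        induction ℓ using Fin.cases with
        | zero => simpa [Fin.cons_zero] using (by simpa [hBdef, dist_zero_right] using hw)
        | succ j => simpa [Fin.cons_succ] using hy j
      have hpre : e ⁻¹' (B ×ˢ S') = S := by
        ext z
        simp only [Set.mem_preimage, Set.mem_prod, happly z, hSdef, Set.mem_setOf_eq,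
          hBdef, Metric.mem_closedBall, dist_zero_right, hS'def]
        rw [Fin.forall_fin_succ]
        simp [Fin.succAbove_zero]
      -- transfer to product
      have htrans : (∫ z in S, F z) = ∫ q in B ×ˢ S', F (e.symm q)
          ∂((volume : Measure ℂ).prod (volume : Measure (Fin n → ℂ))) := by
        rw [← hpre]
        rw [← hmp.setIntegral_preimage_emb e.measurableEmbedding (fun q => F (e.symm q)) (B ×ˢ S')]
        congr 1
        funext z
        rw [MeasurableEquiv.symm_apply_apply]
      set G : ℂ × (Fin n → ℂ) → ℝ := fun q => F (Fin.cons q.1 q.2) with hGdef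
      have hGeq : (∫ q in B ×ˢ S', F (e.symm q)
          ∂((volume : Measure ℂ).prod (volume : Measure (Fin n → ℂ))))
          = ∫ q in B ×ˢ S', G q
          ∂((volume : Measure ℂ).prod (volume : Measure (Fin n → ℂ))) := by
        congr 1; funext q; rw [hGdef]; rw [hsymm q]
      have hGsplit : ∀ q : ℂ × (Fin n → ℂ), G q =
          (‖s (Fin.cons q.1 q.2)‖ ^ 2
            * Real.exp (-2 * ∑ j, a (Fin.succ j) * ‖q.2 j‖ ^ 2))
          * Real.exp (-2 * (a 0) * ‖q.1‖ ^ 2) := by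
        intro q
        rw [hGdef, hFdef]
        simp only []
        have hsum : (-2 : ℝ) * ∑ ℓ, a ℓ * ‖(Fin.cons q.1 q.2 : Fin (n+1) → ℂ) ℓ‖ ^ 2
            = (-2 * ∑ j, a (Fin.succ j) * ‖q.2 j‖ ^ 2) + (-2 * (a 0) * ‖q.1‖ ^ 2) := by
          rw [Fin.sum_univ_succ]
          simp only [Fin.cons_zero, Fin.cons_succ]
          ring
        rw [hsum, Real.exp_add]
        ring
      -- compactness and integrability
      have hBcomp : IsCompact B := isCompact_closedBall _ _
      have hS'comp : IsCompact S' := by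
        have : S' = Set.pi Set.univ (fun j => Metric.closedBall (0:ℂ) (ρ (Fin.succ j))) := by
          ext y; simp [hS'def, Set.mem_pi, dist_zero_right]
        rw [this]
        exact isCompact_univ_pi (fun j => isCompact_closedBall _ _)
      have hconsCont : Continuous fun q : ℂ × (Fin n → ℂ) => (Fin.cons q.1 q.2 : Fin (n+1) → ℂ) :=
        continuous_cons'
      have hmapsU : Set.MapsTo (fun q : ℂ × (Fin n → ℂ) => (Fin.cons q.1 q.2 : Fin (n+1) → ℂ))
          (B ×ˢ S') U := fun q hq => hsubU (hmemS q.1 q.2 hq.1 hq.2)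
      have hGcont : ContinuousOn G (B ×ˢ S') := by
        rw [hGdef, hFdef]
        apply ContinuousOn.mul
        · exact ((hs.continuousOn.comp hconsCont.continuousOn hmapsU).norm.pow 2)
        · apply Continuous.continuousOn
          apply Real.continuous_exp.comp
          apply Continuous.mul continuous_const
          apply continuous_finset_sum
          intro ℓ _
          exact continuous_const.mul (((continuous_apply ℓ).comp hconsCont).norm.pow 2)
      have hGint : IntegrableOn G (B ×ˢ S')
          ((volume : Measure ℂ).prod (volume : Measure (Fin n → ℂ))) := by
        rw [← Measure.volume_eq_prod]
        exact hGcont.integrableOn_compact (hBcomp.prod hS'comp)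
      have hfub : (∫ q in B ×ˢ S', G q
          ∂((volume : Measure ℂ).prod (volume : Measure (Fin n → ℂ))))
          = ∫ w in B, ∫ y in S', G (w, y) := setIntegral_prod G hGint
      -- integrability of inner integral
      have hGint' : Integrable G (((volume : Measure ℂ).restrict B).prod
          ((volume : Measure (Fin n → ℂ)).restrict S')) := by
        rw [Measure.prod_restrict]; exact hGint
      have hinner_int : Integrable (fun w => ∫ y in S', G (w, y))
          ((volume : Measure ℂ).restrict B) := hGint'.integral_prod_left
      -- constants
      set Cn : ℝ := ∏ j : Fin n,
        (Real.pi * (1 - Real.exp (-2 * a (Fin.succ j) * ρ (Fin.succ j) ^ 2))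
          / (2 * a (Fin.succ j))) with hCn
      have hfactor_nonneg : ∀ (aa rr : ℝ), 0 < aa → 0 < rr →
          0 ≤ Real.pi * (1 - Real.exp (-2 * aa * rr ^ 2)) / (2 * aa) := by
        intro aa rr haa hrr
        apply div_nonneg _ (by positivity)
        apply mul_nonneg Real.pi_pos.le
        have : Real.exp (-2 * aa * rr ^ 2) ≤ 1 := by
          rw [Real.exp_le_one_iff]
          nlinarith
        linarith
      have hCn_nonneg : 0 ≤ Cn := by
        rw [hCn]
        exact Finset.prod_nonneg fun j _ => hfactor_nonneg _ _ (ha _) (hρ _)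
      -- inner bound
      have hinner_lb : ∀ w ∈ B,
          (‖s (Fin.cons w (0 : Fin n → ℂ))‖ ^ 2 * Real.exp (-2 * a 0 * ‖w‖ ^ 2)) * Cn
            ≤ ∫ y in S', G (w, y) := by
        intro w hw
        have hUw : IsOpen ((fun y : Fin n → ℂ => (Fin.cons w y : Fin (n+1) → ℂ)) ⁻¹' U) :=
          hU.preimage (differentiable_cons_snd w).continuous
        have hsubw : {y : Fin n → ℂ | ∀ j, ‖y j‖ ≤ ρ (Fin.succ j)}
            ⊆ (fun y : Fin n → ℂ => (Fin.cons w y : Fin (n+1) → ℂ)) ⁻¹' U :=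
          fun y hy => hsubU (hmemS w y hw hy)
        have hsw : DifferentiableOn ℂ (fun y => s (Fin.cons w y))
            ((fun y : Fin n → ℂ => (Fin.cons w y : Fin (n+1) → ℂ)) ⁻¹' U) :=
          hs.comp (differentiable_cons_snd w).differentiableOn (fun y hy => hy)
        have hIH := ih (fun j => ρ (Fin.succ j)) (fun j => a (Fin.succ j))
          (fun j => hρ _) (fun j => ha _) (fun y => s (Fin.cons w y)) _ hUw hsubw hsw
        have hsplit : (∫ y in S', G (w, y))
            = (∫ y in S', ‖s (Fin.cons w y)‖ ^ 2
                * Real.exp (-2 * ∑ j, a (Fin.succ j) * ‖y j‖ ^ 2))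
              * Real.exp (-2 * a 0 * ‖w‖ ^ 2) := by
          rw [← integral_mul_const]
          congr 1; funext y
          exact hGsplit (w, y)
        rw [hsplit, mul_right_comm]
        apply mul_le_mul_of_nonneg_right _ (Real.exp_nonneg _)
        exact hIH
      -- outer estimate
      have hVopen : IsOpen ((fun w : ℂ => (Fin.cons w (0 : Fin n → ℂ) : Fin (n+1) → ℂ)) ⁻¹' U) :=
        hU.preimage continuous_cons_fst
      have hzeroS' : (0 : Fin n → ℂ) ∈ S' := by
        rw [hS'def]; intro j; simp [(hρ (Fin.succ j)).le]
      have hsubV : B ⊆ (fun w : ℂ => (Fin.cons w (0 : Fin n → ℂ) : Fin (n+1) → ℂ)) ⁻¹' U :=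
        fun w hw => hsubU (hmemS w 0 hw hzeroS')
      have hf1 : DifferentiableOn ℂ (fun w : ℂ => s (Fin.cons w (0 : Fin n → ℂ)))
          ((fun w : ℂ => (Fin.cons w (0 : Fin n → ℂ) : Fin (n+1) → ℂ)) ⁻¹' U) :=
        hs.comp differentiable_cons_fst.differentiableOn (fun w hw => hw)
      have hdisk := disk_weighted_bound hVopen hf1 (hρ 0) (ha 0) hsubV
      have hL_int : IntegrableOn
          (fun w : ℂ => (‖s (Fin.cons w (0 : Fin n → ℂ))‖ ^ 2
            * Real.exp (-2 * a 0 * ‖w‖ ^ 2)) * Cn) B := by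
        apply ContinuousOn.integrableOn_compact hBcomp
        apply ContinuousOn.mul _ continuousOn_const
        apply ContinuousOn.mul
        · exact (hs.continuousOn.comp continuous_cons_fst.continuousOn
            (fun w hw => hsubV hw)).norm.pow 2
        · exact (Real.continuous_exp.comp (by fun_prop)).continuousOn
      have houter : (∫ w in B, (‖s (Fin.cons w (0 : Fin n → ℂ))‖ ^ 2
            * Real.exp (-2 * a 0 * ‖w‖ ^ 2)) * Cn)
          ≤ ∫ w in B, ∫ y in S', G (w, y) :=
        setIntegral_mono_on hL_int hinner_int Metric.isClosed_closedBall.measurableSet hinner_lb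
      calc ‖s 0‖ ^ 2 * ∏ ℓ, (Real.pi * (1 - Real.exp (-2 * a ℓ * ρ ℓ ^ 2)) / (2 * a ℓ))
          = (‖s (Fin.cons (0:ℂ) (0 : Fin n → ℂ))‖ ^ 2
              * (Real.pi * (1 - Real.exp (-2 * a 0 * ρ 0 ^ 2)) / (2 * a 0))) * Cn := by
            rw [Fin.prod_univ_succ, cons_zero_zero, hCn]; ring
        _ ≤ (∫ w in B, ‖s (Fin.cons w (0 : Fin n → ℂ))‖ ^ 2
              * Real.exp (-2 * a 0 * ‖w‖ ^ 2)) * Cn :=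
            mul_le_mul_of_nonneg_right hdisk hCn_nonneg
        _ = ∫ w in B, (‖s (Fin.cons w (0 : Fin n → ℂ))‖ ^ 2
              * Real.exp (-2 * a 0 * ‖w‖ ^ 2)) * Cn := (integral_mul_const _ _).symm
        _ ≤ ∫ w in B, ∫ y in S', G (w, y) := houter
        _ = ∫ z in S, F z := by rw [htrans, hGeq, hfub]

/-- Pointwise upper bound for weighted L² norms of holomorphic functions: if `λ_ℓ ≥ ε > 0`
and `s` is holomorphic on a neighborhood of `Δⁿ(0,r)`, then
`|s(0)|² ≤ (pⁿ λ₁⋯λₙ / E(r√(pε))ⁿ) ∫_{Δⁿ(0,r)} |s|² e^{-2p ∑ λ_ℓ |z_ℓ|²} dm`. -/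
theorem pointwise_bound_gaussian_polydisk (n : ℕ) (hn : 1 ≤ n)
    (r p ε : ℝ) (hr : 0 < r) (hp : 0 < p) (hε : 0 < ε)
    (lam : Fin n → ℝ) (hlam : ∀ ℓ, ε ≤ lam ℓ)
    (s : (Fin n → ℂ) → ℂ) (U : Set (Fin n → ℂ)) (hU : IsOpen U)
    (hP : {z : Fin n → ℂ | ∀ ℓ, ‖z ℓ‖ ≤ r} ⊆ U)
    (hs : DifferentiableOn ℂ s U) :
    ‖s 0‖ ^ 2 ≤
      (p ^ n * (∏ ℓ, lam ℓ) / E (r * Real.sqrt (p * ε)) ^ n) *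
        ∫ z in {z : Fin n → ℂ | ∀ ℓ, ‖z ℓ‖ ≤ r},
          ‖s z‖ ^ 2 * Real.exp (-2 * p * ∑ ℓ, lam ℓ * ‖z ℓ‖ ^ 2) := by
  have hlam0 : ∀ ℓ, 0 < lam ℓ := fun ℓ => lt_of_lt_of_le hε (hlam ℓ)
  set ρ : Fin n → ℝ := fun ℓ => r * Real.sqrt (ε / lam ℓ) with hρdef
  set a : Fin n → ℝ := fun ℓ => p * lam ℓ with hadef
  have hρpos : ∀ ℓ, 0 < ρ ℓ := fun ℓ => by
    have : 0 < ε / lam ℓ := div_pos hε (hlam0 ℓ)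
    exact mul_pos hr (Real.sqrt_pos.mpr this)
  have hapos : ∀ ℓ, 0 < a ℓ := fun ℓ => mul_pos hp (hlam0 ℓ)
  have hρler : ∀ ℓ, ρ ℓ ≤ r := by
    intro ℓ
    have h1 : ε / lam ℓ ≤ 1 := (div_le_one (hlam0 ℓ)).mpr (hlam ℓ)
    have : Real.sqrt (ε / lam ℓ) ≤ 1 := by
      rw [show (1:ℝ) = Real.sqrt 1 from (Real.sqrt_one).symm]
      exact Real.sqrt_le_sqrt h1
    calc ρ ℓ = r * Real.sqrt (ε / lam ℓ) := rfl
      _ ≤ r * 1 := mul_le_mul_of_nonneg_left this hr.le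
      _ = r := mul_one r
  have hsubset : {z : Fin n → ℂ | ∀ ℓ, ‖z ℓ‖ ≤ ρ ℓ} ⊆ {z : Fin n → ℂ | ∀ ℓ, ‖z ℓ‖ ≤ r} :=
    fun z hz ℓ => (hz ℓ).trans (hρler ℓ)
  have hmain := poly_weighted_bound n ρ a hρpos hapos s U hU (hsubset.trans hP) hs
  -- identify the constants
  have hEu : E (r * Real.sqrt (p * ε)) = Real.pi / 2 * (1 - Real.exp (-2 * (r ^ 2 * (p * ε)))) := by
    rw [E]
    congr 3
    rw [mul_pow, Real.sq_sqrt (by positivity)]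
  have hEpos : 0 < E (r * Real.sqrt (p * ε)) := by
    rw [hEu]
    have : Real.exp (-2 * (r ^ 2 * (p * ε))) < 1 := by
      apply Real.exp_lt_one_iff.mpr
      have : 0 < r ^ 2 * (p * ε) := by positivity
      nlinarith
    have hπ := Real.pi_pos
    nlinarith
  have hcℓ : ∀ ℓ, Real.pi * (1 - Real.exp (-2 * a ℓ * ρ ℓ ^ 2)) / (2 * a ℓ)
      = E (r * Real.sqrt (p * ε)) / (p * lam ℓ) := by
    intro ℓ
    have hexp : a ℓ * ρ ℓ ^ 2 = r ^ 2 * (p * ε) := by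
      have : ρ ℓ ^ 2 = r ^ 2 * (ε / lam ℓ) := by
        rw [hρdef]
        rw [mul_pow, Real.sq_sqrt (le_of_lt (div_pos hε (hlam0 ℓ)))]
      rw [this, hadef]
      field_simp [(hlam0 ℓ).ne']
    rw [hEu, show (-2 : ℝ) * a ℓ * ρ ℓ ^ 2 = -2 * (a ℓ * ρ ℓ ^ 2) by ring, hexp, hadef]
    field_simp
  have hprod : (∏ ℓ, (Real.pi * (1 - Real.exp (-2 * a ℓ * ρ ℓ ^ 2)) / (2 * a ℓ)))
      = E (r * Real.sqrt (p * ε)) ^ n / (p ^ n * ∏ ℓ, lam ℓ) := by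
    rw [Finset.prod_congr rfl fun ℓ _ => hcℓ ℓ, Finset.prod_div_distrib]
    rw [Finset.prod_const, Finset.card_fin, Finset.prod_mul_distrib, Finset.prod_const,
      Finset.card_fin]
  -- integrand match and monotonicity in the domain
  have hinteq : ∀ z : Fin n → ℂ, ‖s z‖ ^ 2 * Real.exp (-2 * ∑ ℓ, a ℓ * ‖z ℓ‖ ^ 2)
      = ‖s z‖ ^ 2 * Real.exp (-2 * p * ∑ ℓ, lam ℓ * ‖z ℓ‖ ^ 2) := by
    intro z
    congr 2
    rw [Finset.mul_sum, Finset.mul_sum]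
    rw [show (-2 : ℝ) * p = -2 * p from rfl]
    rw [← Finset.sum_congr rfl fun ℓ _ => (by rw [hadef]; ring :
      (-2:ℝ) * (a ℓ * ‖z ℓ‖ ^ 2) = -2 * p * (lam ℓ * ‖z ℓ‖ ^ 2))]
  -- monotonicity in the domain
  have hbigcomp : IsCompact {z : Fin n → ℂ | ∀ ℓ, ‖z ℓ‖ ≤ r} := by
    have : {z : Fin n → ℂ | ∀ ℓ, ‖z ℓ‖ ≤ r} = Set.pi Set.univ (fun _ => Metric.closedBall (0:ℂ) r) := by
      ext z; simp [Set.mem_pi, dist_zero_right]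
    rw [this]
    exact isCompact_univ_pi (fun _ => isCompact_closedBall _ _)
  have hIntBig : IntegrableOn
      (fun z : Fin n → ℂ => ‖s z‖ ^ 2 * Real.exp (-2 * p * ∑ ℓ, lam ℓ * ‖z ℓ‖ ^ 2))
      {z : Fin n → ℂ | ∀ ℓ, ‖z ℓ‖ ≤ r} := by
    apply ContinuousOn.integrableOn_compact hbigcomp
    apply ContinuousOn.mul
    · exact (hs.continuousOn.mono hP).norm.pow 2
    · apply Continuous.continuousOn
      apply Real.continuous_exp.comp
      apply Continuous.mul continuous_const
      apply continuous_finset_sum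
      intro ℓ _
      exact continuous_const.mul ((continuous_apply ℓ).norm.pow 2)
  have hmono : (∫ z in {z : Fin n → ℂ | ∀ ℓ, ‖z ℓ‖ ≤ ρ ℓ},
        ‖s z‖ ^ 2 * Real.exp (-2 * p * ∑ ℓ, lam ℓ * ‖z ℓ‖ ^ 2))
      ≤ ∫ z in {z : Fin n → ℂ | ∀ ℓ, ‖z ℓ‖ ≤ r},
        ‖s z‖ ^ 2 * Real.exp (-2 * p * ∑ ℓ, lam ℓ * ‖z ℓ‖ ^ 2) := by
    apply setIntegral_mono_set hIntBig
    · filter_upwards with z using mul_nonneg (by positivity) (Real.exp_nonneg _)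
    · exact hsubset.eventuallyLE
  have hmain2 : ‖s 0‖ ^ 2 * (E (r * Real.sqrt (p * ε)) ^ n / (p ^ n * ∏ ℓ, lam ℓ))
      ≤ ∫ z in {z : Fin n → ℂ | ∀ ℓ, ‖z ℓ‖ ≤ r},
        ‖s z‖ ^ 2 * Real.exp (-2 * p * ∑ ℓ, lam ℓ * ‖z ℓ‖ ^ 2) := by
    rw [← hprod]
    refine hmain.trans (le_trans (le_of_eq ?_) hmono)
    exact setIntegral_congr_fun (by
      apply IsClosed.measurableSet
      have : {z : Fin n → ℂ | ∀ ℓ, ‖z ℓ‖ ≤ ρ ℓ} = ⋂ ℓ, {z : Fin n → ℂ | ‖z ℓ‖ ≤ ρ ℓ} := by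
        ext z; simp
      rw [this]
      exact isClosed_iInter fun ℓ => isClosed_le ((continuous_apply ℓ).norm) continuous_const)
      (fun z _ => hinteq z)
  -- final arithmetic
  set I := ∫ z in {z : Fin n → ℂ | ∀ ℓ, ‖z ℓ‖ ≤ r},
      ‖s z‖ ^ 2 * Real.exp (-2 * p * ∑ ℓ, lam ℓ * ‖z ℓ‖ ^ 2) with hI
  have hD : 0 < E (r * Real.sqrt (p * ε)) ^ n / (p ^ n * ∏ ℓ, lam ℓ) := by
    apply div_pos (pow_pos hEpos n)
    exact mul_pos (pow_pos hp n) (Finset.prod_pos fun ℓ _ => hlam0 ℓ)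
  have h1 : ‖s 0‖ ^ 2 ≤ I / (E (r * Real.sqrt (p * ε)) ^ n / (p ^ n * ∏ ℓ, lam ℓ)) :=
    (le_div_iff₀ hD).mpr hmain2
  calc ‖s 0‖ ^ 2 ≤ I / (E (r * Real.sqrt (p * ε)) ^ n / (p ^ n * ∏ ℓ, lam ℓ)) := h1
    _ = (p ^ n * (∏ ℓ, lam ℓ) / E (r * Real.sqrt (p * ε)) ^ n) * I := by
        rw [div_div_eq_mul_div]
        ring
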